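/- Let X be a Banach space and suppose there exist x ∈ X with ‖x‖ = 3/4, a norm-one functional ψ with ψ(x) = ‖x‖, unit vectors (yₙ) and norm-one functionals (φₙ) with φₙ(yₙ) = 1, such that ψ(yₙ) = 0 for all n and φ_k(y_i) = 0 for all i > k. Set δₙ = 2^{−(n+2)}, x₁ = x + y₁ and x_{n+1} = x − δ₁y₁ − ⋯ − δₙyₙ + y_{n+1}. Then for all k < n: ‖x_k + xₙ‖ ≥ 3/2 > 1 and ‖x_k − xₙ‖ ≥ 1 + δ_k > 1. -/

import Mathlib

theorem stmt_8 {X : Type*} [NormedAddCommGroup X] [NormedSpace ℝ X]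
    [CompleteSpace X]
    (z : X) (ψ : X →L[ℝ] ℝ) (y : ℕ → X) (φ : ℕ → X →L[ℝ] ℝ)
    (hz : ‖z‖ = 3 / 4) (hψ : ‖ψ‖ = 1) (hψz : ψ z = ‖z‖)
    (hy : ∀ n, ‖y n‖ = 1) (hφ : ∀ n, ‖φ n‖ = 1)
    (hφy : ∀ n, φ n (y n) = 1)
    (hψy : ∀ n, ψ (y n) = 0)
    (hker : ∀ i k : ℕ, k < i → φ k (y i) = 0)
    (δ : ℕ → ℝ) (hδ : ∀ n, δ n = (2 : ℝ) ^ (-(n : ℤ) - 2))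
    (x : ℕ → X)
    (hx1 : x 1 = z + y 1)
    (hxn : ∀ n : ℕ, 1 ≤ n →
      x (n + 1) = z - ∑ j ∈ Finset.Icc 1 n, δ j • y j + y (n + 1)) :
    ∀ k n : ℕ, 1 ≤ k → k < n →
      (3 / 2 : ℝ) ≤ ‖x k + x n‖ ∧ 1 + δ k ≤ ‖x k - x n‖ := by
  have hrep : ∀ n : ℕ, 1 ≤ n →
      x n = z - ∑ j ∈ Finset.Ico 1 n, δ j • y j + y n := by
    intro n hn
    match n, hn with
    | 1, _ => simpa using hx1
    | (m+2), _ =>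
      rw [hxn (m+1) (by omega), ← Finset.Ico_add_one_right_eq_Icc]
      rfl
  intro k n hk hkn
  have hn1 : 1 ≤ n := by omega
  have hsum : ψ (x k + x n) = 3 / 2 := by
    rw [hrep k hk, hrep n hn1]
    simp only [map_add, map_sub, map_sum, map_smul, hψy, smul_eq_mul, mul_zero,
      Finset.sum_const_zero, sub_zero, add_zero, hψz, hz]
    norm_num
  have hdiff : φ k (x k - x n) = 1 + δ k := by
    rw [hrep k hk, hrep n hn1]
    simp only [map_sub, map_add, map_sum, map_smul, smul_eq_mul]
    have hsplit : ∑ j ∈ Finset.Ico 1 k, δ j * φ k (y j) +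
        ∑ j ∈ Finset.Ico k n, δ j * φ k (y j) =
        ∑ j ∈ Finset.Ico 1 n, δ j * φ k (y j) :=
      Finset.sum_Ico_consecutive _ hk (le_of_lt hkn)
    have htail : ∑ j ∈ Finset.Ico k n, δ j * φ k (y j) = δ k := by
      rw [Finset.sum_eq_single k]
      · rw [hφy, mul_one]
      · intro j hj hjk
        rw [hker j k (by rcases Finset.mem_Ico.mp hj with ⟨h1, h2⟩; omega), mul_zero]
      · intro h
        exact absurd (Finset.mem_Ico.mpr ⟨le_refl k, hkn⟩) h
    have h1 := hφy k
    have h2 := hker n k hkn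
    linarith
  constructor
  · calc (3 / 2 : ℝ) = ψ (x k + x n) := hsum.symm
      _ ≤ ‖ψ (x k + x n)‖ := le_abs_self _
      _ ≤ ‖ψ‖ * ‖x k + x n‖ := ψ.le_opNorm _
      _ = ‖x k + x n‖ := by rw [hψ, one_mul]
  · calc (1 + δ k : ℝ) = φ k (x k - x n) := hdiff.symm
      _ ≤ ‖φ k (x k - x n)‖ := le_abs_self _
      _ ≤ ‖φ k‖ * ‖x k - x n‖ := (φ k).le_opNorm _
      _ = ‖x k - x n‖ := by rw [hφ, one_mul]
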